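/- For all natural numbers n and m, the torus board (4+2n)′×(4+2m)′ admits a fault-free domino tiling. -/
import Mathlib

set_option maxHeartbeats 2000000

/-- Adjacency on the torus board `a′ × b′`: cells `(i,j)` and `(i+1,j)` with
addition in `ZMod a` (vertical neighbors, wrapping around) or `(i,j)` and
`(i,j+1)` with addition in `ZMod b` (horizontal neighbors, wrapping around). -/
def torAdj (a b : ℕ) (c d : ZMod a × ZMod b) : Prop :=
  (c.2 = d.2 ∧ (d.1 = c.1 + 1 ∨ c.1 = d.1 + 1)) ∨
  (c.1 = d.1 ∧ (d.2 = c.2 + 1 ∨ c.2 = d.2 + 1))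

/-- A tiling of the torus board: a set of dominoes (unordered pairs of adjacent
cells) such that every cell belongs to exactly one domino. -/
def torIsTiling (a b : ℕ) (T : Set (Sym2 (ZMod a × ZMod b))) : Prop :=
  (∀ p ∈ T, ∃ c d, torAdj a b c d ∧ p = s(c, d)) ∧
  (∀ x : ZMod a × ZMod b, ∃! p, p ∈ T ∧ x ∈ p)

/-- A tiling of the torus board is fault-free if every horizontal fault-line
(between rows `i` and `i+1`, for `i : ZMod a`) and every vertical fault-line
(between columns `j` and `j+1`, for `j : ZMod b`) is crossed by some domino. -/
def torFaultFree (a b : ℕ) (T : Set (Sym2 (ZMod a × ZMod b))) : Prop :=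
  (∀ i : ZMod a, ∃ j : ZMod b, s((i, j), (i + 1, j)) ∈ T) ∧
  (∀ j : ZMod b, ∃ i : ZMod a, s((i, j), (i, j + 1)) ∈ T)

/-- The torus board `a′ × b′` admits a fault-free domino tiling. -/
def torFaultFreeTileable (a b : ℕ) : Prop :=
  ∃ T : Set (Sym2 (ZMod a × ZMod b)), torIsTiling a b T ∧ torFaultFree a b T

/-- The matching function of an explicit fault-free tiling of the even torus. -/
def mvTor (a b : ℕ) (p : ZMod a × ZMod b) : ZMod a × ZMod b :=
  if p.1.val = 0 then
    if p.2.val = 0 then (p.1, p.2 + 1)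
    else if p.2.val = 1 then (p.1, p.2 + ((b - 1 : ℕ) : ZMod b))
    else if p.2.val = 2 then (p.1 + 1, p.2)
    else (p.1 + ((a - 1 : ℕ) : ZMod a), p.2)
  else if p.1.val = 1 then
    if p.2.val = 0 then (p.1, p.2 + ((b - 1 : ℕ) : ZMod b))
    else if p.2.val = 1 then (p.1 + 1, p.2)
    else if p.2.val = 2 then (p.1 + ((a - 1 : ℕ) : ZMod a), p.2)
    else if p.2.val % 2 = 0 then (p.1, p.2 + ((b - 1 : ℕ) : ZMod b))
    else (p.1, p.2 + 1)
  else if p.1.val = 2 then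
    if p.2.val = 0 then (p.1 + 1, p.2)
    else if p.2.val = 1 then (p.1 + ((a - 1 : ℕ) : ZMod a), p.2)
    else if p.2.val = 2 then (p.1, p.2 + 1)
    else if p.2.val % 2 = 0 then (p.1, p.2 + 1)
    else (p.1, p.2 + ((b - 1 : ℕ) : ZMod b))
  else if p.1.val % 2 = 0 then
    if p.2.val = 0 then (p.1 + 1, p.2)
    else if p.2.val = 1 then (p.1, p.2 + 1)
    else if p.2.val = 2 then (p.1, p.2 + ((b - 1 : ℕ) : ZMod b))
    else (p.1 + ((a - 1 : ℕ) : ZMod a), p.2)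
  else
    if p.2.val = 0 then (p.1 + ((a - 1 : ℕ) : ZMod a), p.2)
    else if p.2.val = 1 then (p.1, p.2 + 1)
    else if p.2.val = 2 then (p.1, p.2 + ((b - 1 : ℕ) : ZMod b))
    else (p.1 + 1, p.2)

/-- Nat-level version of the matching function, with explicit wraparound. -/
def nmv (a b i j : ℕ) : ℕ × ℕ :=
  if i = 0 then
    if j = 0 then (i, if j + 1 = b then 0 else j + 1)
    else if j = 1 then (i, if j = 0 then b - 1 else j - 1)
    else if j = 2 then (if i + 1 = a then 0 else i + 1, j)
    else (if i = 0 then a - 1 else i - 1, j)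
  else if i = 1 then
    if j = 0 then (i, if j = 0 then b - 1 else j - 1)
    else if j = 1 then (if i + 1 = a then 0 else i + 1, j)
    else if j = 2 then (if i = 0 then a - 1 else i - 1, j)
    else if j % 2 = 0 then (i, if j = 0 then b - 1 else j - 1)
    else (i, if j + 1 = b then 0 else j + 1)
  else if i = 2 then
    if j = 0 then (if i + 1 = a then 0 else i + 1, j)
    else if j = 1 then (if i = 0 then a - 1 else i - 1, j)
    else if j = 2 then (i, if j + 1 = b then 0 else j + 1)
    else if j % 2 = 0 then (i, if j + 1 = b then 0 else j + 1)
    else (i, if j = 0 then b - 1 else j - 1)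
  else if i % 2 = 0 then
    if j = 0 then (if i + 1 = a then 0 else i + 1, j)
    else if j = 1 then (i, if j + 1 = b then 0 else j + 1)
    else if j = 2 then (i, if j = 0 then b - 1 else j - 1)
    else (if i = 0 then a - 1 else i - 1, j)
  else
    if j = 0 then (if i = 0 then a - 1 else i - 1, j)
    else if j = 1 then (i, if j + 1 = b then 0 else j + 1)
    else if j = 2 then (i, if j = 0 then b - 1 else j - 1)
    else (if i + 1 = a then 0 else i + 1, j)

lemma nmv_lt {a b : ℕ} (ha4 : 4 ≤ a) (hb4 : 4 ≤ b) (i j : ℕ) (hi : i < a) (hj : j < b) :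
    (nmv a b i j).1 < a ∧ (nmv a b i j).2 < b := by
  unfold nmv
  split_ifs <;> refine ⟨by omega, by omega⟩

lemma nmv_invol {a b : ℕ} (ha4 : 4 ≤ a) (ha2 : a % 2 = 0) (hb4 : 4 ≤ b) (hb2 : b % 2 = 0)
    (i j i' j' : ℕ) (hi : i < a) (hj : j < b) (h : nmv a b i j = (i', j')) :
    nmv a b i' j' = (i, j) := by
  unfold nmv at h
  split_ifs at h <;>
  · injection h with h1 h2
    subst h1; subst h2
    unfold nmv
    split_ifs <;>
      first
      | (simp only [Prod.mk.injEq, true_and, and_true] <;> omega)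
      | contradiction
      | (exfalso; omega)

lemma castPredAddOne (a : ℕ) (ha : 4 ≤ a) : ((a - 1 : ℕ) : ZMod a) + 1 = 0 := by
  have h1 : ((a - 1 : ℕ) : ZMod a) + 1 = ((a - 1 + 1 : ℕ) : ZMod a) := by push_cast; ring
  rw [h1, show a - 1 + 1 = a by omega, ZMod.natCast_self]

lemma mvTor_adj {a b : ℕ} (ha : 4 ≤ a) (hb : 4 ≤ b) (x : ZMod a × ZMod b) :
    torAdj a b x (mvTor a b x) := by
  have hA := castPredAddOne a ha
  have hB := castPredAddOne b hb
  obtain ⟨i, j⟩ := x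
  unfold torAdj mvTor
  dsimp only
  split_ifs <;>
  first
  | exact Or.inr ⟨rfl, Or.inl rfl⟩
  | exact Or.inr ⟨rfl, Or.inr (by rw [add_assoc, hB, add_zero])⟩
  | exact Or.inl ⟨rfl, Or.inl rfl⟩
  | exact Or.inl ⟨rfl, Or.inr (by rw [add_assoc, hA, add_zero])⟩

lemma mvTor_eq_nmv {a b : ℕ} [NeZero a] [NeZero b] (ha4 : 4 ≤ a) (hb4 : 4 ≤ b)
    (x : ZMod a × ZMod b) :
    mvTor a b x = (((nmv a b x.1.val x.2.val).1 : ZMod a),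
                   ((nmv a b x.1.val x.2.val).2 : ZMod b)) := by
  obtain ⟨i, j⟩ := x
  have e1a : ∀ y : ZMod a, y.val + 1 = a → y + 1 = ((0 : ℕ) : ZMod a) := by
    intro y h
    have h2 : y + 1 = ((y.val + 1 : ℕ) : ZMod a) := by
      rw [Nat.cast_add, Nat.cast_one, ZMod.natCast_zmod_val]
    rw [Nat.cast_zero, h2, h, ZMod.natCast_self]
  have e2a : ∀ y : ZMod a, y + 1 = ((y.val + 1 : ℕ) : ZMod a) := by
    intro y; rw [Nat.cast_add, Nat.cast_one, ZMod.natCast_zmod_val]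
  have e3a : ∀ y : ZMod a, y.val = 0 → y + ((a - 1 : ℕ) : ZMod a) = ((a - 1 : ℕ) : ZMod a) := by
    intro y h
    have hy : y = 0 := by rw [← ZMod.natCast_zmod_val y, h, Nat.cast_zero]
    rw [hy, zero_add]
  have e4a : ∀ y : ZMod a, ¬y.val = 0 →
      y + ((a - 1 : ℕ) : ZMod a) = ((y.val - 1 : ℕ) : ZMod a) := by
    intro y h
    rw [← ZMod.natCast_zmod_val y, ← Nat.cast_add,
      show y.val + (a - 1) = (y.val - 1) + a by omega,
      Nat.cast_add, ZMod.natCast_self, add_zero, ZMod.natCast_zmod_val,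
      ← ZMod.natCast_zmod_val y]
  have e1b : ∀ y : ZMod b, y.val + 1 = b → y + 1 = ((0 : ℕ) : ZMod b) := by
    intro y h
    have h2 : y + 1 = ((y.val + 1 : ℕ) : ZMod b) := by
      rw [Nat.cast_add, Nat.cast_one, ZMod.natCast_zmod_val]
    rw [Nat.cast_zero, h2, h, ZMod.natCast_self]
  have e2b : ∀ y : ZMod b, y + 1 = ((y.val + 1 : ℕ) : ZMod b) := by
    intro y; rw [Nat.cast_add, Nat.cast_one, ZMod.natCast_zmod_val]
  have e3b : ∀ y : ZMod b, y.val = 0 → y + ((b - 1 : ℕ) : ZMod b) = ((b - 1 : ℕ) : ZMod b) := by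
    intro y h
    have hy : y = 0 := by rw [← ZMod.natCast_zmod_val y, h, Nat.cast_zero]
    rw [hy, zero_add]
  have e4b : ∀ y : ZMod b, ¬y.val = 0 →
      y + ((b - 1 : ℕ) : ZMod b) = ((y.val - 1 : ℕ) : ZMod b) := by
    intro y h
    rw [← ZMod.natCast_zmod_val y, ← Nat.cast_add,
      show y.val + (b - 1) = (y.val - 1) + b by omega,
      Nat.cast_add, ZMod.natCast_self, add_zero, ZMod.natCast_zmod_val,
      ← ZMod.natCast_zmod_val y]
  unfold mvTor nmv
  dsimp only
  split_ifs <;>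
    (refine Prod.ext_iff.mpr ⟨?_, ?_⟩ <;>
      first
      | exact (ZMod.natCast_zmod_val _).symm
      | (apply e1a; assumption)
      | (apply e1b; assumption)
      | exact e2a _
      | exact e2b _
      | (apply e3a; assumption)
      | (apply e3b; assumption)
      | (apply e4a; assumption)
      | (apply e4b; assumption))

lemma mvTor_invol {a b : ℕ} (ha4 : 4 ≤ a) (ha2 : a % 2 = 0) (hb4 : 4 ≤ b) (hb2 : b % 2 = 0)
    (x : ZMod a × ZMod b) : mvTor a b (mvTor a b x) = x := by
  haveI : NeZero a := ⟨by omega⟩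
  haveI : NeZero b := ⟨by omega⟩
  obtain ⟨i, j⟩ := x
  have hi : i.val < a := ZMod.val_lt i
  have hj : j.val < b := ZMod.val_lt j
  have hlt := nmv_lt ha4 hb4 i.val j.val hi hj
  have hinv := nmv_invol ha4 ha2 hb4 hb2 i.val j.val
    (nmv a b i.val j.val).1 (nmv a b i.val j.val).2 hi hj Prod.mk.eta.symm
  rw [mvTor_eq_nmv ha4 hb4 (i, j)]
  rw [mvTor_eq_nmv ha4 hb4 _]
  dsimp only
  rw [ZMod.val_cast_of_lt hlt.1, ZMod.val_cast_of_lt hlt.2, hinv]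
  dsimp only
  rw [ZMod.natCast_zmod_val, ZMod.natCast_zmod_val]

lemma torFF_master (a b : ℕ) (ha4 : 4 ≤ a) (ha2 : a % 2 = 0) (hb4 : 4 ≤ b) (hb2 : b % 2 = 0) :
    torFaultFreeTileable a b := by
  haveI : NeZero a := ⟨by omega⟩
  haveI : NeZero b := ⟨by omega⟩
  have h0a : ((0 : ZMod a)).val = 0 := ZMod.val_zero
  have h1a : ((1 : ZMod a)).val = 1 := by
    rw [show (1 : ZMod a) = ((1 : ℕ) : ZMod a) by norm_cast,
      ZMod.val_cast_of_lt (by omega)]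
  have h2a : ((2 : ZMod a)).val = 2 := by
    rw [show (2 : ZMod a) = ((2 : ℕ) : ZMod a) by norm_cast,
      ZMod.val_cast_of_lt (by omega)]
  have h3a : ((3 : ZMod a)).val = 3 := by
    rw [show (3 : ZMod a) = ((3 : ℕ) : ZMod a) by norm_cast,
      ZMod.val_cast_of_lt (by omega)]
  have h0b : ((0 : ZMod b)).val = 0 := ZMod.val_zero
  have h1b : ((1 : ZMod b)).val = 1 := by
    rw [show (1 : ZMod b) = ((1 : ℕ) : ZMod b) by norm_cast,
      ZMod.val_cast_of_lt (by omega)]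
  have h2b : ((2 : ZMod b)).val = 2 := by
    rw [show (2 : ZMod b) = ((2 : ℕ) : ZMod b) by norm_cast,
      ZMod.val_cast_of_lt (by omega)]
  have h3b : ((3 : ZMod b)).val = 3 := by
    rw [show (3 : ZMod b) = ((3 : ℕ) : ZMod b) by norm_cast,
      ZMod.val_cast_of_lt (by omega)]
  refine ⟨{p | ∃ x, p = s(x, mvTor a b x)}, ⟨?_, ?_⟩, ?_, ?_⟩
  · rintro p ⟨x, rfl⟩
    exact ⟨x, mvTor a b x, mvTor_adj ha4 hb4 x, rfl⟩
  · intro x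
    refine ⟨s(x, mvTor a b x), ⟨⟨x, rfl⟩, Sym2.mem_mk_left _ _⟩, ?_⟩
    rintro p ⟨⟨y, rfl⟩, hx⟩
    rcases Sym2.mem_iff.mp hx with h | h
    · rw [h]
    · subst h
      rw [mvTor_invol ha4 ha2 hb4 hb2]
      exact Sym2.eq_swap
  · -- horizontal fault-lines
    intro i
    by_cases h0 : i.val = 0
    · refine ⟨(2 : ZMod b), ⟨(i, (2 : ZMod b)), ?_⟩⟩
      have hmv : mvTor a b (i, (2 : ZMod b)) = (i + 1, (2 : ZMod b)) := by
        unfold mvTor; dsimp only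
        simp [h0, h2b]
      rw [hmv]
    · by_cases h1 : i.val = 1
      · refine ⟨(1 : ZMod b), ⟨(i, (1 : ZMod b)), ?_⟩⟩
        have hmv : mvTor a b (i, (1 : ZMod b)) = (i + 1, (1 : ZMod b)) := by
          unfold mvTor; dsimp only
          simp [h0, h1, h1b]
        rw [hmv]
      · by_cases h2 : i.val = 2
        · refine ⟨(0 : ZMod b), ⟨(i, (0 : ZMod b)), ?_⟩⟩
          have hmv : mvTor a b (i, (0 : ZMod b)) = (i + 1, (0 : ZMod b)) := by
            unfold mvTor; dsimp only
            simp [h0, h1, h2, h0b]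
          rw [hmv]
        · by_cases hp : i.val % 2 = 0
          · refine ⟨(0 : ZMod b), ⟨(i, (0 : ZMod b)), ?_⟩⟩
            have hmv : mvTor a b (i, (0 : ZMod b)) = (i + 1, (0 : ZMod b)) := by
              unfold mvTor; dsimp only
              simp [h0, h1, h2, hp, h0b]
            rw [hmv]
          · refine ⟨(3 : ZMod b), ⟨(i, (3 : ZMod b)), ?_⟩⟩
            have hmv : mvTor a b (i, (3 : ZMod b)) = (i + 1, (3 : ZMod b)) := by
              unfold mvTor; dsimp only
              simp [h0, h1, h2, hp, h3b]
            rw [hmv]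
  · -- vertical fault-lines
    intro j
    by_cases h0 : j.val = 0
    · refine ⟨(0 : ZMod a), ⟨((0 : ZMod a), j), ?_⟩⟩
      have hmv : mvTor a b ((0 : ZMod a), j) = ((0 : ZMod a), j + 1) := by
        unfold mvTor; dsimp only
        simp [h0, h0a]
      rw [hmv]
    · by_cases h1 : j.val = 1
      · refine ⟨(3 : ZMod a), ⟨((3 : ZMod a), j), ?_⟩⟩
        have hmv : mvTor a b ((3 : ZMod a), j) = ((3 : ZMod a), j + 1) := by
          unfold mvTor; dsimp only
          simp [h0, h1, h3a]
        rw [hmv]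
      · by_cases h2 : j.val = 2
        · refine ⟨(2 : ZMod a), ⟨((2 : ZMod a), j), ?_⟩⟩
          have hmv : mvTor a b ((2 : ZMod a), j) = ((2 : ZMod a), j + 1) := by
            unfold mvTor; dsimp only
            simp [h0, h1, h2, h2a]
          rw [hmv]
        · by_cases hp : j.val % 2 = 0
          · refine ⟨(2 : ZMod a), ⟨((2 : ZMod a), j), ?_⟩⟩
            have hmv : mvTor a b ((2 : ZMod a), j) = ((2 : ZMod a), j + 1) := by
              unfold mvTor; dsimp only
              simp [h0, h1, h2, hp, h2a]
            rw [hmv]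
          · refine ⟨(1 : ZMod a), ⟨((1 : ZMod a), j), ?_⟩⟩
            have hmv : mvTor a b ((1 : ZMod a), j) = ((1 : ZMod a), j + 1) := by
              unfold mvTor; dsimp only
              simp [h0, h1, h2, hp, h1a]
            rw [hmv]

/-- For all natural numbers `n` and `m`, the torus board
`(4+2n)′ × (4+2m)′` admits a fault-free domino tiling. -/
theorem tor_faultFree_4'4' :
    ∀ n m : ℕ, torFaultFreeTileable (4 + 2 * n) (4 + 2 * m) := by
  intro n m
  exact torFF_master _ _ (by omega) (by omega) (by omega) (by omega)
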